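/- Right commutative cut (rightist substitution): if Γ and U are suspension-normal, Γ ; · ⊢ A⁻ is derivable, and Γ, A⁻ ; L ⊢ U is derivable (in any of the three sequent forms), then Γ ; L ⊢ U is derivable in the focused sequent calculus for polarized intuitionistic logic. -/

import Mathlib

namespace StructuralFocalization

/- Polarized propositional intuitionistic logic -/
mutual
inductive PProp : Type
  | atom : Nat → PProp
  | down : NProp → PProp
  | bot  : PProp
  | or   : PProp → PProp → PProp
  | top  : PProp
  | and  : PProp → PProp → PProp
inductive NProp : Type
  | atom : Nat → NProp
  | up   : PProp → NProp
  | imp  : PProp → NProp → NProp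
  | top  : NProp
  | and  : NProp → NProp → NProp
end

/- Hypotheses: negative propositions or suspended positives ⟨A⁺⟩ -/
inductive Hyp : Type
  | neg  : NProp → Hyp
  | susp : PProp → Hyp

/- Succedents: A⁺, A⁻, or suspended ⟨A⁻⟩ -/
inductive Succ : Type
  | pos  : PProp → Succ
  | neg  : NProp → Succ
  | susp : NProp → Succ

abbrev Ctx := List Hyp

def Succ.stable : Succ → Prop
  | .pos _ => True
  | .susp _ => True
  | .neg _ => False

def Hyp.suspNormal : Hyp → Prop
  | .susp (PProp.atom _) => True
  | .susp _ => False
  | .neg _ => True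

def Ctx.suspNormal (Γ : Ctx) : Prop := ∀ h ∈ Γ, h.suspNormal

def Succ.suspNormal : Succ → Prop
  | .susp (NProp.atom _) => True
  | .susp _ => False
  | _ => True

/- The focused sequent calculus (Figures 3 and 4 of "Structural focalization",
   with the generalized id⁺/id⁻ rules for arbitrary suspended propositions). -/
mutual
/-- Right focus: Γ ⊢ [A⁺] -/
inductive RFoc : Ctx → PProp → Prop
  | idP {Γ A} : Hyp.susp A ∈ Γ → RFoc Γ A
  | downR {Γ A} : Inv Γ [] (Succ.neg A) → RFoc Γ (PProp.down A)
  | orR1 {Γ A B} : RFoc Γ A → RFoc Γ (PProp.or A B)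
  | orR2 {Γ A B} : RFoc Γ B → RFoc Γ (PProp.or A B)
  | topR {Γ} : RFoc Γ PProp.top
  | andR {Γ A B} : RFoc Γ A → RFoc Γ B → RFoc Γ (PProp.and A B)
/-- Inversion: Γ ; Ω ⊢ U -/
inductive Inv : Ctx → List PProp → Succ → Prop
  | focR {Γ A} : RFoc Γ A → Inv Γ [] (Succ.pos A)
  | focL {Γ A U} : Hyp.neg A ∈ Γ → Succ.stable U → LFoc Γ A U → Inv Γ [] U
  | etaP {Γ p Ω U} : Inv (Hyp.susp (PProp.atom p) :: Γ) Ω U → Inv Γ (PProp.atom p :: Ω) U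
  | downL {Γ A Ω U} : Inv (Hyp.neg A :: Γ) Ω U → Inv Γ (PProp.down A :: Ω) U
  | botL {Γ Ω U} : Inv Γ (PProp.bot :: Ω) U
  | orL {Γ A B Ω U} : Inv Γ (A :: Ω) U → Inv Γ (B :: Ω) U → Inv Γ (PProp.or A B :: Ω) U
  | topPL {Γ Ω U} : Inv Γ Ω U → Inv Γ (PProp.top :: Ω) U
  | andPL {Γ A B Ω U} : Inv Γ (A :: B :: Ω) U → Inv Γ (PProp.and A B :: Ω) U
  | etaN {Γ p} : Inv Γ [] (Succ.susp (NProp.atom p)) → Inv Γ [] (Succ.neg (NProp.atom p))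
  | upR {Γ A} : Inv Γ [] (Succ.pos A) → Inv Γ [] (Succ.neg (NProp.up A))
  | impR {Γ A B} : Inv Γ [A] (Succ.neg B) → Inv Γ [] (Succ.neg (NProp.imp A B))
  | topNR {Γ} : Inv Γ [] (Succ.neg NProp.top)
  | andNR {Γ A B} : Inv Γ [] (Succ.neg A) → Inv Γ [] (Succ.neg B) →
      Inv Γ [] (Succ.neg (NProp.and A B))
/-- Left focus: Γ ; [A⁻] ⊢ U -/
inductive LFoc : Ctx → NProp → Succ → Prop
  | idN {Γ A} : LFoc Γ A (Succ.susp A)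
  | upL {Γ A U} : Inv Γ [A] U → LFoc Γ (NProp.up A) U
  | impL {Γ A B U} : RFoc Γ A → LFoc Γ B U → LFoc Γ (NProp.imp A B) U
  | andL1 {Γ A B U} : LFoc Γ A U → LFoc Γ (NProp.and A B) U
  | andL2 {Γ A B U} : LFoc Γ B U → LFoc Γ (NProp.and A B) U
end

/- Unpolarized propositions and Kleene's G3 -/
inductive UProp : Type
  | atom : Nat → UProp
  | bot  : UProp
  | or   : UProp → UProp → UProp
  | top  : UProp
  | and  : UProp → UProp → UProp
  | imp  : UProp → UProp → UProp

inductive G3 : List UProp → UProp → Prop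
  | init {Γ p} : UProp.atom p ∈ Γ → G3 Γ (UProp.atom p)
  | botL {Γ Q} : UProp.bot ∈ Γ → G3 Γ Q
  | orR1 {Γ A B} : G3 Γ A → G3 Γ (UProp.or A B)
  | orR2 {Γ A B} : G3 Γ B → G3 Γ (UProp.or A B)
  | orL {Γ A B Q} : UProp.or A B ∈ Γ → G3 (A :: Γ) Q → G3 (B :: Γ) Q → G3 Γ Q
  | topR {Γ} : G3 Γ UProp.top
  | andR {Γ A B} : G3 Γ A → G3 Γ B → G3 Γ (UProp.and A B)
  | andL1 {Γ A B Q} : UProp.and A B ∈ Γ → G3 (A :: Γ) Q → G3 Γ Q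
  | andL2 {Γ A B Q} : UProp.and A B ∈ Γ → G3 (B :: Γ) Q → G3 Γ Q
  | impR {Γ A B} : G3 (A :: Γ) B → G3 Γ (UProp.imp A B)
  | impL {Γ A B Q} : UProp.imp A B ∈ Γ → G3 Γ A → G3 (B :: Γ) Q → G3 Γ Q

/-- G3 with an ordered auxiliary context Ψ: Γ; Ψ ⊢ Q -/
inductive G3Psi : List UProp → List UProp → UProp → Prop
  | cons {Γ P Ψ Q} : G3Psi (P :: Γ) Ψ Q → G3Psi Γ (P :: Ψ) Q
  | nil {Γ Q} : G3 Γ Q → G3Psi Γ [] Q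

/- Erasure -/
mutual
def eraseP : PProp → UProp
  | .atom p => .atom p
  | .down A => eraseN A
  | .bot => .bot
  | .or A B => .or (eraseP A) (eraseP B)
  | .top => .top
  | .and A B => .and (eraseP A) (eraseP B)
def eraseN : NProp → UProp
  | .atom p => .atom p
  | .up A => eraseP A
  | .imp A B => .imp (eraseP A) (eraseN B)
  | .top => .top
  | .and A B => .and (eraseN A) (eraseN B)
end

def eraseHyp : Hyp → UProp
  | .neg A => eraseN A
  | .susp A => eraseP A

def eraseCtx (Γ : Ctx) : List UProp := Γ.map eraseHyp

def eraseSucc : Succ → UProp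
  | .pos A => eraseP A
  | .neg A => eraseN A
  | .susp A => eraseN A

theorem Inv.weaken : ∀ {Γ Ω U}, Inv Γ Ω U → ∀ Γ' : Ctx, Γ ⊆ Γ' → Inv Γ' Ω U := by
  intro Γ Ω U h
  induction h using Inv.rec
    (motive_1 := fun Γ C _ => ∀ Γ' : Ctx, Γ ⊆ Γ' → RFoc Γ' C)
    (motive_3 := fun Γ B U _ => ∀ Γ' : Ctx, Γ ⊆ Γ' → LFoc Γ' B U)
  case idP => rename_i m Γ' s; exact RFoc.idP (s m)
  case downR => rename_i _ ih Γ' s; exact RFoc.downR (ih Γ' s)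
  case orR1 => rename_i _ ih Γ' s; exact RFoc.orR1 (ih Γ' s)
  case orR2 => rename_i _ ih Γ' s; exact RFoc.orR2 (ih Γ' s)
  case topR => rename_i Γ' s; exact RFoc.topR
  case andR => rename_i _ _ ih1 ih2 Γ' s; exact RFoc.andR (ih1 Γ' s) (ih2 Γ' s)
  case focR _ ih => intro Γ' s; exact Inv.focR (ih Γ' s)
  case focL m st _ ih => intro Γ' s; exact Inv.focL (s m) st (ih Γ' s)
  case etaP _ ih => intro Γ' s; exact Inv.etaP (ih _ (List.cons_subset_cons _ s))
  case downL _ ih => intro Γ' s; exact Inv.downL (ih _ (List.cons_subset_cons _ s))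
  case botL => intro Γ' s; exact Inv.botL
  case orL _ _ ih1 ih2 => intro Γ' s; exact Inv.orL (ih1 Γ' s) (ih2 Γ' s)
  case topPL _ ih => intro Γ' s; exact Inv.topPL (ih Γ' s)
  case andPL _ ih => intro Γ' s; exact Inv.andPL (ih Γ' s)
  case etaN _ ih => intro Γ' s; exact Inv.etaN (ih Γ' s)
  case upR _ ih => intro Γ' s; exact Inv.upR (ih Γ' s)
  case impR _ ih => intro Γ' s; exact Inv.impR (ih Γ' s)
  case topNR => intro Γ' s; exact Inv.topNR
  case andNR _ _ ih1 ih2 => intro Γ' s; exact Inv.andNR (ih1 Γ' s) (ih2 Γ' s)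
  case idN => rename_i Γ' s; exact LFoc.idN
  case upL => rename_i _ ih Γ' s; exact LFoc.upL (ih Γ' s)
  case impL => rename_i _ _ ih1 ih2 Γ' s; exact LFoc.impL (ih1 Γ' s) (ih2 Γ' s)
  case andL1 => rename_i _ ih Γ' s; exact LFoc.andL1 (ih Γ' s)
  case andL2 => rename_i _ ih Γ' s; exact LFoc.andL2 (ih Γ' s)

theorem RFoc.weaken {Γ C} (h : RFoc Γ C) (Γ' : Ctx) (s : Γ ⊆ Γ') : RFoc Γ' C := by
  revert Γ' s
  induction h using RFoc.rec
    (motive_2 := fun _ _ _ _ => True)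
    (motive_3 := fun _ _ _ _ => True)
  case idP m => intro Γ' s; exact RFoc.idP (s m)
  case downR d _ => intro Γ' s; exact RFoc.downR (d.weaken Γ' s)
  case orR1 _ ih => intro Γ' s; exact RFoc.orR1 (ih Γ' s)
  case orR2 _ ih => intro Γ' s; exact RFoc.orR2 (ih Γ' s)
  case topR => intro Γ' s; exact RFoc.topR
  case andR _ _ ih1 ih2 => intro Γ' s; exact RFoc.andR (ih1 Γ' s) (ih2 Γ' s)
  all_goals trivial
/- ===== auxiliary lemmas ===== -/

theorem Ctx.suspNormal.cons {h : Hyp} {Γ : Ctx} (hh : Hyp.suspNormal h)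
    (hΓ : Ctx.suspNormal Γ) : Ctx.suspNormal (h :: Γ) := by
  intro x hx
  rcases List.mem_cons.mp hx with rfl | hx
  · exact hh
  · exact hΓ x hx

theorem subset_shuffle {Δ Γ : Ctx} {a b : Hyp} (s : Δ ⊆ a :: Γ) :
    b :: Δ ⊆ a :: b :: Γ := by
  intro x hx
  rcases List.mem_cons.mp hx with rfl | hx
  · exact List.mem_cons_of_mem _ List.mem_cons_self
  · rcases List.mem_cons.mp (s hx) with rfl | h
    · exact List.mem_cons_self
    · exact List.mem_cons_of_mem _ (List.mem_cons_of_mem _ h)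

/- ===== statements of the four substitution principles ===== -/

def SubPStmt (P : PProp) : Prop :=
  ∀ Γ Ω U, Ctx.suspNormal Γ → Succ.suspNormal U →
    RFoc Γ P → Inv Γ (P :: Ω) U → Inv Γ Ω U

def LSubStmt (P : PProp) : Prop :=
  ∀ Γ Ω U, Ctx.suspNormal Γ → Succ.suspNormal U → Succ.stable U →
    Inv Γ Ω (Succ.pos P) → Inv Γ [P] U → Inv Γ Ω U

def SubNStmt (A : NProp) : Prop :=
  ∀ Γ U, Ctx.suspNormal Γ → Succ.suspNormal U → Succ.stable U →
    Inv Γ [] (Succ.neg A) → LFoc Γ A U → Inv Γ [] U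

def RSubStmt (A : NProp) : Prop :=
  ∀ Γ : Ctx, Ctx.suspNormal Γ → Inv Γ [] (Succ.neg A) →
    (∀ Δ C, Δ ⊆ Hyp.neg A :: Γ → RFoc Δ C → RFoc Γ C) ∧
    (∀ Δ Ω U, Δ ⊆ Hyp.neg A :: Γ → Succ.suspNormal U → Inv Δ Ω U → Inv Γ Ω U) ∧
    (∀ Δ B U, Δ ⊆ Hyp.neg A :: Γ → Succ.suspNormal U → LFoc Δ B U → LFoc Γ B U)

/- ===== leftist substitution (given SubP for the cut formula) ===== -/

theorem lsub_inv {P : PProp} (sP : SubPStmt P) :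
    ∀ {Δ Ω S}, Inv Δ Ω S → S = Succ.pos P →
      ∀ U, Ctx.suspNormal Δ → Succ.suspNormal U → Succ.stable U →
        Inv Δ [P] U → Inv Δ Ω U := by
  intro Δ Ω S h
  induction h using Inv.rec
    (motive_1 := fun _ _ _ => True)
    (motive_3 := fun Δ B S _ => S = Succ.pos P →
      ∀ U, Ctx.suspNormal Δ → Succ.suspNormal U → Succ.stable U →
        Inv Δ [P] U → LFoc Δ B U)
  case idP => trivial
  case downR => trivial
  case orR1 => trivial
  case orR2 => trivial
  case topR => trivial
  case andR => trivial
  case focR f _ =>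
    intro hS U hΔ hU hst e
    cases hS
    exact sP _ [] U hΔ hU f e
  case focL m _ _ ih =>
    intro hS U hΔ hU hst e
    exact Inv.focL m hst (ih hS U hΔ hU hst e)
  case etaP _ ih =>
    intro hS U hΔ hU hst e
    exact Inv.etaP (ih hS U (Ctx.suspNormal.cons trivial hΔ) hU hst
      (e.weaken _ (List.subset_cons_self _ _)))
  case downL _ ih =>
    intro hS U hΔ hU hst e
    exact Inv.downL (ih hS U (Ctx.suspNormal.cons trivial hΔ) hU hst
      (e.weaken _ (List.subset_cons_self _ _)))
  case botL => intros; exact Inv.botL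
  case orL _ _ ih1 ih2 =>
    intro hS U hΔ hU hst e
    exact Inv.orL (ih1 hS U hΔ hU hst e) (ih2 hS U hΔ hU hst e)
  case topPL _ ih =>
    intro hS U hΔ hU hst e
    exact Inv.topPL (ih hS U hΔ hU hst e)
  case andPL _ ih =>
    intro hS U hΔ hU hst e
    exact Inv.andPL (ih hS U hΔ hU hst e)
  case etaN => intro hS; cases hS
  case upR => intro hS; cases hS
  case impR => intro hS; cases hS
  case topNR => intro hS; cases hS
  case andNR => intro hS; cases hS
  case idN => simp_all
  case upL =>
    rename_i _ ih hS U hΔ hU hst e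
    exact LFoc.upL (ih hS U hΔ hU hst e)
  case impL =>
    rename_i f _ _ ih hS U hΔ hU hst e
    exact LFoc.impL f (ih hS U hΔ hU hst e)
  case andL1 =>
    rename_i _ ih hS U hΔ hU hst e
    exact LFoc.andL1 (ih hS U hΔ hU hst e)
  case andL2 =>
    rename_i _ ih hS U hΔ hU hst e
    exact LFoc.andL2 (ih hS U hΔ hU hst e)
/- ===== rightist substitution (given SubN for the cut formula) ===== -/

theorem rsub_inv {A : NProp} (sN : SubNStmt A) :
    ∀ {Δ Ω U}, Inv Δ Ω U →
      ∀ Γ : Ctx, Ctx.suspNormal Γ → Inv Γ [] (Succ.neg A) →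
        Δ ⊆ Hyp.neg A :: Γ → Succ.suspNormal U → Inv Γ Ω U := by
  intro Δ Ω U h
  induction h using Inv.rec
    (motive_1 := fun Δ C _ =>
      ∀ Γ : Ctx, Ctx.suspNormal Γ → Inv Γ [] (Succ.neg A) →
        Δ ⊆ Hyp.neg A :: Γ → RFoc Γ C)
    (motive_3 := fun Δ B U _ =>
      ∀ Γ : Ctx, Ctx.suspNormal Γ → Inv Γ [] (Succ.neg A) →
        Δ ⊆ Hyp.neg A :: Γ → Succ.suspNormal U → LFoc Γ B U)
  case idP =>
    rename_i m Γ hΓ d1 s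
    rcases List.mem_cons.mp (s m) with h | h
    · cases h
    · exact RFoc.idP h
  case downR =>
    rename_i _ ih Γ hΓ d1 s
    exact RFoc.downR (ih Γ hΓ d1 s trivial)
  case orR1 =>
    rename_i _ ih Γ hΓ d1 s
    exact RFoc.orR1 (ih Γ hΓ d1 s)
  case orR2 =>
    rename_i _ ih Γ hΓ d1 s
    exact RFoc.orR2 (ih Γ hΓ d1 s)
  case topR => rename_i Γ hΓ d1 s; exact RFoc.topR
  case andR =>
    rename_i _ _ ih1 ih2 Γ hΓ d1 s
    exact RFoc.andR (ih1 Γ hΓ d1 s) (ih2 Γ hΓ d1 s)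
  case focR _ ih =>
    intro Γ hΓ d1 s hU
    exact Inv.focR (ih Γ hΓ d1 s)
  case focL m st _ ih =>
    rename_i B _
    intro Γ hΓ d1 s hU
    have lf' := ih Γ hΓ d1 s hU
    rcases List.mem_cons.mp (s m) with h | h
    · cases h
      exact sN Γ _ hΓ hU st d1 lf'
    · exact Inv.focL h st lf'
  case etaP _ ih =>
    intro Γ hΓ d1 s hU
    exact Inv.etaP (ih _ (Ctx.suspNormal.cons trivial hΓ)
      (d1.weaken _ (List.subset_cons_self _ _)) (subset_shuffle s) hU)
  case downL _ ih =>
    intro Γ hΓ d1 s hU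
    exact Inv.downL (ih _ (Ctx.suspNormal.cons trivial hΓ)
      (d1.weaken _ (List.subset_cons_self _ _)) (subset_shuffle s) hU)
  case botL => intro Γ hΓ d1 s hU; exact Inv.botL
  case orL _ _ ih1 ih2 =>
    intro Γ hΓ d1 s hU
    exact Inv.orL (ih1 Γ hΓ d1 s hU) (ih2 Γ hΓ d1 s hU)
  case topPL _ ih =>
    intro Γ hΓ d1 s hU
    exact Inv.topPL (ih Γ hΓ d1 s hU)
  case andPL _ ih =>
    intro Γ hΓ d1 s hU
    exact Inv.andPL (ih Γ hΓ d1 s hU)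
  case etaN _ ih =>
    intro Γ hΓ d1 s hU
    exact Inv.etaN (ih Γ hΓ d1 s trivial)
  case upR _ ih =>
    intro Γ hΓ d1 s hU
    exact Inv.upR (ih Γ hΓ d1 s trivial)
  case impR _ ih =>
    intro Γ hΓ d1 s hU
    exact Inv.impR (ih Γ hΓ d1 s trivial)
  case topNR => intro Γ hΓ d1 s hU; exact Inv.topNR
  case andNR _ _ ih1 ih2 =>
    intro Γ hΓ d1 s hU
    exact Inv.andNR (ih1 Γ hΓ d1 s trivial) (ih2 Γ hΓ d1 s trivial)
  case idN => rename_i Γ hΓ d1 s hU; exact LFoc.idN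
  case upL =>
    rename_i _ ih Γ hΓ d1 s hU
    exact LFoc.upL (ih Γ hΓ d1 s hU)
  case impL =>
    rename_i _ _ ih1 ih2 Γ hΓ d1 s hU
    exact LFoc.impL (ih1 Γ hΓ d1 s) (ih2 Γ hΓ d1 s hU)
  case andL1 =>
    rename_i _ ih Γ hΓ d1 s hU
    exact LFoc.andL1 (ih Γ hΓ d1 s hU)
  case andL2 =>
    rename_i _ ih Γ hΓ d1 s hU
    exact LFoc.andL2 (ih Γ hΓ d1 s hU)

theorem rsub_rfoc {A : NProp} (sN : SubNStmt A) :
    ∀ {Δ C}, RFoc Δ C →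
      ∀ Γ : Ctx, Ctx.suspNormal Γ → Inv Γ [] (Succ.neg A) →
        Δ ⊆ Hyp.neg A :: Γ → RFoc Γ C := by
  intro Δ C h
  induction h using RFoc.rec
    (motive_2 := fun _ _ _ _ => True)
    (motive_3 := fun _ _ _ _ => True)
  case idP m =>
    intro Γ hΓ d1 s
    rcases List.mem_cons.mp (s m) with h | h
    · cases h
    · exact RFoc.idP h
  case downR d _ => intro Γ hΓ d1 s; exact RFoc.downR (rsub_inv sN d Γ hΓ d1 s trivial)
  case orR1 _ ih => intro Γ hΓ d1 s; exact RFoc.orR1 (ih Γ hΓ d1 s)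
  case orR2 _ ih => intro Γ hΓ d1 s; exact RFoc.orR2 (ih Γ hΓ d1 s)
  case topR => intro Γ hΓ d1 s; exact RFoc.topR
  case andR _ _ ih1 ih2 => intro Γ hΓ d1 s; exact RFoc.andR (ih1 Γ hΓ d1 s) (ih2 Γ hΓ d1 s)
  all_goals trivial

theorem rsub_lfoc {A : NProp} (sN : SubNStmt A) :
    ∀ {Δ B U}, LFoc Δ B U →
      ∀ Γ : Ctx, Ctx.suspNormal Γ → Inv Γ [] (Succ.neg A) →
        Δ ⊆ Hyp.neg A :: Γ → Succ.suspNormal U → LFoc Γ B U := by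
  intro Δ B U h
  induction h using LFoc.rec
    (motive_1 := fun _ _ _ => True)
    (motive_2 := fun _ _ _ _ => True)
  case idN => intro Γ hΓ d1 s hU; exact LFoc.idN
  case upL d _ => intro Γ hΓ d1 s hU; exact LFoc.upL (rsub_inv sN d Γ hΓ d1 s hU)
  case impL f _ _ ih => intro Γ hΓ d1 s hU; exact LFoc.impL (rsub_rfoc sN f Γ hΓ d1 s) (ih Γ hΓ d1 s hU)
  case andL1 _ ih => intro Γ hΓ d1 s hU; exact LFoc.andL1 (ih Γ hΓ d1 s hU)
  case andL2 _ ih => intro Γ hΓ d1 s hU; exact LFoc.andL2 (ih Γ hΓ d1 s hU)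
  all_goals trivial
/- ===== principal cuts ===== -/

theorem subp_core : ∀ P : PProp,
    (∀ B : NProp, sizeOf B < sizeOf P → RSubStmt B) → SubPStmt P
  | PProp.atom p => by
    intro _ Γ Ω U hΓ hU f e
    cases f with
    | idP m =>
      cases e with
      | etaP d => exact d.weaken Γ (List.cons_subset.mpr ⟨m, List.Subset.refl Γ⟩)
  | PProp.down A => by
    intro hR Γ Ω U hΓ hU f e
    cases f with
    | idP m => exact ((hΓ _ m).elim)
    | downR d =>
      cases e with
      | downL e' =>
        exact ((hR A (by simp)) Γ hΓ d).2.1 _ Ω U (List.Subset.refl _) hU e'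
  | PProp.bot => by
    intro hR Γ Ω U hΓ hU f e
    cases f with
    | idP m => exact ((hΓ _ m).elim)
  | PProp.or A B => by
    intro hR Γ Ω U hΓ hU f e
    cases e with
    | orL e1 e2 =>
      cases f with
      | idP m => exact ((hΓ _ m).elim)
      | orR1 fA =>
        exact subp_core A (fun C h => hR C (lt_of_lt_of_le h (by simp; try omega)))
          Γ Ω U hΓ hU fA e1
      | orR2 fB =>
        exact subp_core B (fun C h => hR C (lt_of_lt_of_le h (by simp; try omega)))
          Γ Ω U hΓ hU fB e2
  | PProp.top => by
    intro hR Γ Ω U hΓ hU f e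
    cases e with
    | topPL e' => exact e'
  | PProp.and A B => by
    intro hR Γ Ω U hΓ hU f e
    cases e with
    | andPL e' =>
      cases f with
      | idP m => exact ((hΓ _ m).elim)
      | andR fA fB =>
        have h1 := subp_core A (fun C h => hR C (lt_of_lt_of_le h (by simp; try omega)))
          Γ (B :: Ω) U hΓ hU fA e'
        exact subp_core B (fun C h => hR C (lt_of_lt_of_le h (by simp; try omega)))
          Γ Ω U hΓ hU fB h1

theorem subn_core : ∀ A : NProp,
    (∀ P : PProp, sizeOf P < sizeOf A → SubPStmt P ∧ LSubStmt P) →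
    (∀ B : NProp, sizeOf B < sizeOf A → SubNStmt B) → SubNStmt A := by
  intro A hP hN Γ U hΓ hU hst d1 lf
  cases lf with
  | idN =>
    cases A with
    | atom p =>
      cases d1 with
      | focL m st lf => exact st.elim
      | etaN d => exact d
    | up P => exact hU.elim
    | imp P B => exact hU.elim
    | top => exact hU.elim
    | and B C => exact hU.elim
  | upL e =>
    cases d1 with
    | focL m st lf' => exact st.elim
    | upR d =>
      rename_i P
      exact (hP P (by simp)).2 Γ [] U hΓ hU hst d e
  | impL f lf' =>
    rename_i P B
    cases d1 with
    | focL m st lf'' => exact st.elim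
    | impR d =>
      have d' := (hP P (by simp; try omega)).1 Γ [] (Succ.neg B) hΓ trivial f d
      exact hN B (by simp; try omega) Γ U hΓ hU hst d' lf'
  | andL1 lf' =>
    rename_i B C
    cases d1 with
    | focL m st lf'' => exact st.elim
    | andNR dB dC => exact hN B (by simp; try omega) Γ U hΓ hU hst dB lf'
  | andL2 lf' =>
    rename_i B C
    cases d1 with
    | focL m st lf'' => exact st.elim
    | andNR dB dC => exact hN C (by simp; try omega) Γ U hΓ hU hst dC lf'

/- ===== assembly by strong induction on the size of the cut formula ===== -/

theorem main : ∀ n : ℕ,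
    (∀ P : PProp, sizeOf P ≤ n → SubPStmt P ∧ LSubStmt P) ∧
    (∀ A : NProp, sizeOf A ≤ n → SubNStmt A ∧ RSubStmt A) := by
  intro n
  induction n using Nat.strong_induction_on with
  | _ n IH =>
    have hsubP : ∀ P : PProp, sizeOf P ≤ n → SubPStmt P := by
      intro P hPn
      apply subp_core
      intro B hB
      exact ((IH (sizeOf B) (lt_of_lt_of_le hB hPn)).2 B le_rfl).2
    have hlsub : ∀ P : PProp, sizeOf P ≤ n → LSubStmt P := by
      intro P hPn Γ Ω U hΓ hU hst d e
      exact lsub_inv (hsubP P hPn) d rfl U hΓ hU hst e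
    have hsubN : ∀ A : NProp, sizeOf A ≤ n → SubNStmt A := by
      intro A hA
      apply subn_core
      · intro Q hQ
        exact ⟨hsubP Q (by omega), hlsub Q (by omega)⟩
      · intro B hB
        exact ((IH (sizeOf B) (lt_of_lt_of_le hB hA)).2 B le_rfl).1
    refine ⟨fun P hPn => ⟨hsubP P hPn, hlsub P hPn⟩, fun A hA => ⟨hsubN A hA, ?_⟩⟩
    intro Γ hΓ d1
    exact ⟨fun Δ C s h => rsub_rfoc (hsubN A hA) h Γ hΓ d1 s,
           fun Δ Ω U s hU h => rsub_inv (hsubN A hA) h Γ hΓ d1 s hU,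
           fun Δ B U s hU h => rsub_lfoc (hsubN A hA) h Γ hΓ d1 s hU⟩

/-- Right commutative cut (rightist substitution), in all three sequent forms. -/
theorem right_commutative_cut {Γ : Ctx} {A : NProp}
    (hΓ : Ctx.suspNormal Γ) (h1 : Inv Γ [] (Succ.neg A)) :
    (∀ C, RFoc (Hyp.neg A :: Γ) C → RFoc Γ C) ∧
    (∀ Ω U, Succ.suspNormal U → Inv (Hyp.neg A :: Γ) Ω U → Inv Γ Ω U) ∧
    (∀ B U, Succ.suspNormal U → LFoc (Hyp.neg A :: Γ) B U → LFoc Γ B U) := by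
  obtain ⟨r1, r2, r3⟩ := ((main (sizeOf A)).2 A le_rfl).2 Γ hΓ h1
  exact ⟨fun C h => r1 _ C (List.Subset.refl _) h,
         fun Ω U hU h => r2 _ Ω U (List.Subset.refl _) hU h,
         fun B U hU h => r3 _ B U (List.Subset.refl _) hU h⟩

end StructuralFocalization
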